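/- arXiv:1901.02315 — 2 statements merged into one kernel-verified Lean document; each statement's English description precedes it below -/
import Mathlib

section
/- The decomposition of the complex coefficient Δt/(ε₀(εᵣ + (j₁+j₂)h)) in bicomplex arithmetic yields real and imaginary parts α^R, α^{I₁}, α^{I₂}, α^{I₁₂} each of absolute value at most Δt/(ε₀εᵣ), for any h and εᵣ > 0. -/
/-- Bicomplex numbers `x + j₁ y + j₂ z + j₁j₂ w` with real coefficients. -/
@[ext] structure Bicomplex where
  x : ℝ
  y : ℝ
  z : ℝ
  w : ℝ

namespace Bicomplex

instance : Add Bicomplex := ⟨fun a b => ⟨a.x + b.x, a.y + b.y, a.z + b.z, a.w + b.w⟩⟩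
instance : Neg Bicomplex := ⟨fun a => ⟨-a.x, -a.y, -a.z, -a.w⟩⟩
instance : Zero Bicomplex := ⟨⟨0, 0, 0, 0⟩⟩
instance : One Bicomplex := ⟨⟨1, 0, 0, 0⟩⟩
instance : Mul Bicomplex :=
  ⟨fun a b =>
    ⟨a.x * b.x - a.y * b.y - a.z * b.z + a.w * b.w,
     a.x * b.y + a.y * b.x - a.z * b.w - a.w * b.z,
     a.x * b.z + a.z * b.x - a.y * b.w - a.w * b.y,
     a.x * b.w + a.w * b.x + a.y * b.z + a.z * b.y⟩⟩

@[simp] lemma add_x (a b : Bicomplex) : (a + b).x = a.x + b.x := rfl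
@[simp] lemma add_y (a b : Bicomplex) : (a + b).y = a.y + b.y := rfl
@[simp] lemma add_z (a b : Bicomplex) : (a + b).z = a.z + b.z := rfl
@[simp] lemma add_w (a b : Bicomplex) : (a + b).w = a.w + b.w := rfl
@[simp] lemma neg_x (a : Bicomplex) : (-a).x = -a.x := rfl
@[simp] lemma neg_y (a : Bicomplex) : (-a).y = -a.y := rfl
@[simp] lemma neg_z (a : Bicomplex) : (-a).z = -a.z := rfl
@[simp] lemma neg_w (a : Bicomplex) : (-a).w = -a.w := rfl
@[simp] lemma zero_x : (0 : Bicomplex).x = 0 := rfl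
@[simp] lemma zero_y : (0 : Bicomplex).y = 0 := rfl
@[simp] lemma zero_z : (0 : Bicomplex).z = 0 := rfl
@[simp] lemma zero_w : (0 : Bicomplex).w = 0 := rfl
@[simp] lemma one_x : (1 : Bicomplex).x = 1 := rfl
@[simp] lemma one_y : (1 : Bicomplex).y = 0 := rfl
@[simp] lemma one_z : (1 : Bicomplex).z = 0 := rfl
@[simp] lemma one_w : (1 : Bicomplex).w = 0 := rfl
@[simp] lemma mul_x (a b : Bicomplex) :
    (a * b).x = a.x * b.x - a.y * b.y - a.z * b.z + a.w * b.w := rfl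
@[simp] lemma mul_y (a b : Bicomplex) :
    (a * b).y = a.x * b.y + a.y * b.x - a.z * b.w - a.w * b.z := rfl
@[simp] lemma mul_z (a b : Bicomplex) :
    (a * b).z = a.x * b.z + a.z * b.x - a.y * b.w - a.w * b.y := rfl
@[simp] lemma mul_w (a b : Bicomplex) :
    (a * b).w = a.x * b.w + a.w * b.x + a.y * b.z + a.z * b.y := rfl

instance : CommRing Bicomplex where
  add_assoc a b c := by ext <;> simp <;> ring
  zero_add a := by ext <;> simp
  add_zero a := by ext <;> simp
  add_comm a b := by ext <;> simp <;> ring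
  mul_assoc a b c := by ext <;> simp <;> ring
  one_mul a := by ext <;> simp
  mul_one a := by ext <;> simp
  left_distrib a b c := by ext <;> simp <;> ring
  right_distrib a b c := by ext <;> simp <;> ring
  zero_mul a := by ext <;> simp
  mul_zero a := by ext <;> simp
  neg_add_cancel a := by ext <;> simp
  mul_comm a b := by ext <;> simp <;> ring
  nsmul := nsmulRec
  zsmul := zsmulRec

/-- The first imaginary unit `j₁`. -/
def j1 : Bicomplex := ⟨0, 1, 0, 0⟩
/-- The second imaginary unit `j₂`. -/
def j2 : Bicomplex := ⟨0, 0, 1, 0⟩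

/-- The canonical ring homomorphism from `ℝ` into the bicomplex numbers. -/
def constHom : ℝ →+* Bicomplex where
  toFun r := ⟨r, 0, 0, 0⟩
  map_one' := rfl
  map_mul' a b := by ext <;> simp
  map_zero' := rfl
  map_add' a b := by ext <;> simp

@[simp] lemma constHom_x (r : ℝ) : (constHom r).x = r := rfl
@[simp] lemma constHom_y (r : ℝ) : (constHom r).y = 0 := rfl
@[simp] lemma constHom_z (r : ℝ) : (constHom r).z = 0 := rfl
@[simp] lemma constHom_w (r : ℝ) : (constHom r).w = 0 := rfl

end Bicomplex

open Bicomplex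

/-- The decomposition of `Δt/(ε₀(εᵣ + (j₁+j₂)h))` in bicomplex arithmetic yields real and
imaginary parts `α^R, α^{I₁}, α^{I₂}, α^{I₁₂}`, each of absolute value at most
`Δt/(ε₀εᵣ)`, for any real `h` and `εᵣ > 0`. -/
theorem bicomplex_update_coefficient_bounds (Δt ε₀ εᵣ h : ℝ)
    (hΔt : 0 < Δt) (hε₀ : 0 < ε₀) (hεᵣ : 0 < εᵣ) :
    ∀ α : Bicomplex,
      constHom ε₀ * (constHom εᵣ + constHom h * (j1 + j2)) * α = constHom Δt →
      |α.x| ≤ Δt / (ε₀ * εᵣ) ∧ |α.y| ≤ Δt / (ε₀ * εᵣ) ∧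
      |α.z| ≤ Δt / (ε₀ * εᵣ) ∧ |α.w| ≤ Δt / (ε₀ * εᵣ) := by
  intro α heq
  obtain ⟨a, ha_def⟩ : ∃ a : ℝ, ε₀ * εᵣ = a := ⟨_, rfl⟩
  obtain ⟨b, hb_def⟩ : ∃ b : ℝ, ε₀ * h = b := ⟨_, rfl⟩
  rw [ha_def]
  have ha : 0 < a := ha_def ▸ mul_pos hε₀ hεᵣ
  have e1 : a * α.x - b * α.y - b * α.z = Δt := by
    have := congrArg Bicomplex.x heq
    simp [j1, j2] at this
    rw [← ha_def, ← hb_def]; ring_nf; ring_nf at this; linarith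
  have e2 : a * α.y + b * α.x - b * α.w = 0 := by
    have := congrArg Bicomplex.y heq
    simp [j1, j2] at this
    rw [← ha_def, ← hb_def]; ring_nf; ring_nf at this; linarith
  have e3 : a * α.z + b * α.x - b * α.w = 0 := by
    have := congrArg Bicomplex.z heq
    simp [j1, j2] at this
    rw [← ha_def, ← hb_def]; ring_nf; ring_nf at this; linarith
  have e4 : a * α.w + b * α.z + b * α.y = 0 := by
    have := congrArg Bicomplex.w heq
    simp [j1, j2] at this
    rw [← ha_def, ← hb_def]; ring_nf; ring_nf at this; linarith
  have hyz : α.y = α.z := by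
    have h5 : a * (α.y - α.z) = 0 := by linarith
    have := mul_eq_zero.mp h5
    rcases this with h | h
    · exact absurd h (ne_of_gt ha)
    · linarith
  have e1' : a * α.x - 2 * b * α.y = Δt := by rw [hyz] at e1 ⊢; linarith
  have e4' : a * α.w + 2 * b * α.y = 0 := by rw [hyz] at e4 ⊢; linarith
  have Iy : α.y * (a ^ 2 + 4 * b ^ 2) = -b * Δt := by
    linear_combination (-b) * e1' + a * e2 + b * e4'
  have Ix : a * α.x * (a ^ 2 + 4 * b ^ 2) = Δt * (a ^ 2 + 2 * b ^ 2) := by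
    linear_combination (a ^ 2 + 4 * b ^ 2) * e1' + 2 * b * Iy
  have Iw : a * α.w * (a ^ 2 + 4 * b ^ 2) = 2 * b ^ 2 * Δt := by
    linear_combination (a ^ 2 + 4 * b ^ 2) * e4' - 2 * b * Iy
  have hs : (0:ℝ) < a ^ 2 + 4 * b ^ 2 := by positivity
  have goalx : |α.x| ≤ Δt / a := by
    rw [abs_le, ← neg_div, div_le_iff₀ ha, le_div_iff₀ ha]
    constructor <;> nlinarith [sq_nonneg b, mul_pos hΔt hs]
  have goaly : |α.y| ≤ Δt / a := by
    rw [abs_le, ← neg_div, div_le_iff₀ ha, le_div_iff₀ ha]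
    constructor <;>
      nlinarith [sq_nonneg (a + 2 * b), sq_nonneg (a - 2 * b), mul_pos hΔt hs]
  have goalw : |α.w| ≤ Δt / a := by
    rw [abs_le, ← neg_div, div_le_iff₀ ha, le_div_iff₀ ha]
    constructor <;> nlinarith [sq_nonneg b, mul_pos hΔt hs]
  exact ⟨goalx, goaly, hyz ▸ goaly, goalw⟩
end

section
/- Multicomplex step approximation of a mixed partial: for a real polynomial F(ξ₁, ξ₂) of two variables, the coefficient of j₁j₂ in F(ξ₁ + j₁h₁, ξ₂ + j₂h₂), computed in the bicomplex ring, equals h₁h₂·∂²F/∂ξ₁∂ξ₂(ξ₁,ξ₂) + O(h₁h₂·(h₁²+h₂²)) as h₁, h₂ → 0. -/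
open Bicomplex Filter Topology Asymptotics
namespace MCAux

open MvPolynomial

variable (ξ₁ ξ₂ : ℝ)

/-- Evaluation of `F` at the bicomplex points. -/
noncomputable def EV (F : MvPolynomial (Fin 2) ℝ) (p : ℝ × ℝ) : Bicomplex :=
  MvPolynomial.eval₂ constHom
    (fun i : Fin 2 => if i = 0 then constHom ξ₁ + constHom p.1 * j1
      else constHom ξ₂ + constHom p.2 * j2) F

/-- Real evaluation at `(ξ₁, ξ₂)`. -/
noncomputable def ev0 (F : MvPolynomial (Fin 2) ℝ) : ℝ :=
  MvPolynomial.eval (fun i : Fin 2 => if i = 0 then ξ₁ else ξ₂) F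

/-- Structural decomposition of the bicomplex evaluation. -/
structure Decomp (F : MvPolynomial (Fin 2) ℝ) where
  Ax : ℝ × ℝ → ℝ
  Bx : ℝ × ℝ → ℝ
  Ay : ℝ × ℝ → ℝ
  By : ℝ × ℝ → ℝ
  Az : ℝ × ℝ → ℝ
  Bz : ℝ × ℝ → ℝ
  Aw : ℝ × ℝ → ℝ
  Bw : ℝ × ℝ → ℝ
  cAx : Continuous Ax
  cBx : Continuous Bx
  cAy : Continuous Ay
  cBy : Continuous By
  cAz : Continuous Az
  cBz : Continuous Bz
  cAw : Continuous Aw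
  cBw : Continuous Bw
  hx : ∀ p : ℝ × ℝ, (EV ξ₁ ξ₂ F p).x = ev0 ξ₁ ξ₂ F + p.1 ^ 2 * Ax p + p.2 ^ 2 * Bx p
  hy : ∀ p : ℝ × ℝ, (EV ξ₁ ξ₂ F p).y
      = p.1 * (ev0 ξ₁ ξ₂ (pderiv 0 F) + p.1 ^ 2 * Ay p + p.2 ^ 2 * By p)
  hz : ∀ p : ℝ × ℝ, (EV ξ₁ ξ₂ F p).z
      = p.2 * (ev0 ξ₁ ξ₂ (pderiv 1 F) + p.1 ^ 2 * Az p + p.2 ^ 2 * Bz p)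
  hw : ∀ p : ℝ × ℝ, (EV ξ₁ ξ₂ F p).w
      = p.1 * p.2 * (ev0 ξ₁ ξ₂ (pderiv 1 (pderiv 0 F)) + p.1 ^ 2 * Aw p + p.2 ^ 2 * Bw p)

lemma EV_C (c : ℝ) (p : ℝ × ℝ) : EV ξ₁ ξ₂ (C c) p = constHom c := by
  simp [EV]

lemma EV_add (F G : MvPolynomial (Fin 2) ℝ) (p : ℝ × ℝ) :
    EV ξ₁ ξ₂ (F + G) p = EV ξ₁ ξ₂ F p + EV ξ₁ ξ₂ G p := by
  simp [EV, MvPolynomial.eval₂_add]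

lemma EV_mul_X0 (F : MvPolynomial (Fin 2) ℝ) (p : ℝ × ℝ) :
    EV ξ₁ ξ₂ (F * X 0) p = EV ξ₁ ξ₂ F p * ⟨ξ₁, p.1, 0, 0⟩ := by
  rw [EV, MvPolynomial.eval₂_mul, MvPolynomial.eval₂_X]
  congr 1
  simp only [if_pos rfl]
  ext <;> simp [j1]

lemma EV_mul_X1 (F : MvPolynomial (Fin 2) ℝ) (p : ℝ × ℝ) :
    EV ξ₁ ξ₂ (F * X 1) p = EV ξ₁ ξ₂ F p * ⟨ξ₂, 0, p.2, 0⟩ := by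
  rw [EV, MvPolynomial.eval₂_mul, MvPolynomial.eval₂_X]
  congr 1
  simp only [show (1 : Fin 2) ≠ 0 by decide, if_neg]
  ext <;> simp [j2]

lemma ev0_mul_X0 (F : MvPolynomial (Fin 2) ℝ) : ev0 ξ₁ ξ₂ (F * X 0) = ev0 ξ₁ ξ₂ F * ξ₁ := by
  simp [ev0]

lemma ev0_mul_X1 (F : MvPolynomial (Fin 2) ℝ) : ev0 ξ₁ ξ₂ (F * X 1) = ev0 ξ₁ ξ₂ F * ξ₂ := by
  simp [ev0]

lemma decomp_ex : ∀ F : MvPolynomial (Fin 2) ℝ, Nonempty (Decomp ξ₁ ξ₂ F) := by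
  intro F
  induction F using MvPolynomial.induction_on with
  | C c =>
      refine ⟨⟨0, 0, 0, 0, 0, 0, 0, 0, continuous_const, continuous_const, continuous_const,
        continuous_const, continuous_const, continuous_const, continuous_const, continuous_const,
        ?_, ?_, ?_, ?_⟩⟩ <;> intro p <;> simp [EV_C, ev0]
  | add F G DF' DG' =>
      obtain ⟨DF⟩ := DF'
      obtain ⟨DG⟩ := DG'
      refine ⟨⟨DF.Ax + DG.Ax, DF.Bx + DG.Bx, DF.Ay + DG.Ay, DF.By + DG.By,
        DF.Az + DG.Az, DF.Bz + DG.Bz, DF.Aw + DG.Aw, DF.Bw + DG.Bw,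
        DF.cAx.add DG.cAx, DF.cBx.add DG.cBx, DF.cAy.add DG.cAy, DF.cBy.add DG.cBy,
        DF.cAz.add DG.cAz, DF.cBz.add DG.cBz, DF.cAw.add DG.cAw, DF.cBw.add DG.cBw,
        ?_, ?_, ?_, ?_⟩⟩ <;> intro p <;>
        simp only [EV_add, add_x, add_y, add_z, add_w, Pi.add_apply, map_add,
          DF.hx p, DG.hx p, DF.hy p, DG.hy p, DF.hz p, DG.hz p, DF.hw p, DG.hw p,
          ev0, MvPolynomial.eval_add] <;> ring
  | mul_X F i DF' =>
      obtain ⟨DF⟩ := DF'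
      fin_cases i
      · -- i = 0
        refine ⟨⟨fun p => ξ₁ * DF.Ax p - (ev0 ξ₁ ξ₂ (pderiv 0 F) + p.1 ^ 2 * DF.Ay p + p.2 ^ 2 * DF.By p),
          fun p => ξ₁ * DF.Bx p,
          fun p => DF.Ax p + ξ₁ * DF.Ay p,
          fun p => DF.Bx p + ξ₁ * DF.By p,
          fun p => ξ₁ * DF.Az p - (ev0 ξ₁ ξ₂ (pderiv 1 (pderiv 0 F)) + p.1 ^ 2 * DF.Aw p + p.2 ^ 2 * DF.Bw p),
          fun p => ξ₁ * DF.Bz p,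
          fun p => ξ₁ * DF.Aw p + DF.Az p,
          fun p => ξ₁ * DF.Bw p + DF.Bz p,
          ?_, ?_, ?_, ?_, ?_, ?_, ?_, ?_, ?_, ?_, ?_, ?_⟩⟩
        case _ => exact ((continuous_const.mul DF.cAx).sub ((continuous_const.add
            ((continuous_fst.pow 2).mul DF.cAy)).add ((continuous_snd.pow 2).mul DF.cBy)))
        case _ => exact continuous_const.mul DF.cBx
        case _ => exact DF.cAx.add (continuous_const.mul DF.cAy)
        case _ => exact DF.cBx.add (continuous_const.mul DF.cBy)
        case _ => exact ((continuous_const.mul DF.cAz).sub ((continuous_const.add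
            ((continuous_fst.pow 2).mul DF.cAw)).add ((continuous_snd.pow 2).mul DF.cBw)))
        case _ => exact continuous_const.mul DF.cBz
        case _ => exact (continuous_const.mul DF.cAw).add DF.cAz
        case _ => exact (continuous_const.mul DF.cBw).add DF.cBz
        all_goals
          intro p
          simp only [Fin.mk_zero, EV_mul_X0, mul_x, mul_y, mul_z, mul_w]
          simp only [DF.hx p, DF.hy p, DF.hz p, DF.hw p]
          simp only [ev0, Fin.mk_zero, Fin.mk_one, pderiv_mul, pderiv_X, Pi.single_eq_same,
            Pi.single_eq_of_ne (show (0:Fin 2) ≠ 1 by decide),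
            Pi.single_eq_of_ne (show (1:Fin 2) ≠ 0 by decide),
            map_add, map_mul, MvPolynomial.eval_add, MvPolynomial.eval_mul, MvPolynomial.eval_X, map_one, map_zero, mul_one, mul_zero, add_zero, zero_add,
            Fin.isValue, ite_true, ite_false, if_pos rfl]
          ring
      · -- i = 1
        refine ⟨⟨fun p => ξ₂ * DF.Ax p,
          fun p => ξ₂ * DF.Bx p - (ev0 ξ₁ ξ₂ (pderiv 1 F) + p.1 ^ 2 * DF.Az p + p.2 ^ 2 * DF.Bz p),
          fun p => ξ₂ * DF.Ay p,
          fun p => ξ₂ * DF.By p - (ev0 ξ₁ ξ₂ (pderiv 1 (pderiv 0 F)) + p.1 ^ 2 * DF.Aw p + p.2 ^ 2 * DF.Bw p),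
          fun p => DF.Ax p + ξ₂ * DF.Az p,
          fun p => DF.Bx p + ξ₂ * DF.Bz p,
          fun p => ξ₂ * DF.Aw p + DF.Ay p,
          fun p => ξ₂ * DF.Bw p + DF.By p,
          ?_, ?_, ?_, ?_, ?_, ?_, ?_, ?_, ?_, ?_, ?_, ?_⟩⟩
        case _ => exact continuous_const.mul DF.cAx
        case _ => exact ((continuous_const.mul DF.cBx).sub ((continuous_const.add
            ((continuous_fst.pow 2).mul DF.cAz)).add ((continuous_snd.pow 2).mul DF.cBz)))
        case _ => exact continuous_const.mul DF.cAy
        case _ => exact ((continuous_const.mul DF.cBy).sub ((continuous_const.add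
            ((continuous_fst.pow 2).mul DF.cAw)).add ((continuous_snd.pow 2).mul DF.cBw)))
        case _ => exact DF.cAx.add (continuous_const.mul DF.cAz)
        case _ => exact DF.cBx.add (continuous_const.mul DF.cBz)
        case _ => exact (continuous_const.mul DF.cAw).add DF.cAy
        case _ => exact (continuous_const.mul DF.cBw).add DF.cBy
        all_goals
          intro p
          simp only [Fin.mk_one, EV_mul_X1, mul_x, mul_y, mul_z, mul_w]
          simp only [DF.hx p, DF.hy p, DF.hz p, DF.hw p]
          simp only [ev0, Fin.mk_zero, Fin.mk_one, pderiv_mul, pderiv_X, Pi.single_eq_same,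
            Pi.single_eq_of_ne (show (0:Fin 2) ≠ 1 by decide),
            Pi.single_eq_of_ne (show (1:Fin 2) ≠ 0 by decide),
            map_add, map_mul, MvPolynomial.eval_add, MvPolynomial.eval_mul, MvPolynomial.eval_X, map_one, map_zero, mul_one, mul_zero, add_zero, zero_add,
            Fin.isValue, ite_true, ite_false, if_neg (show ¬(1:Fin 2) = 0 by decide)]
          ring

end MCAux
/-- Multicomplex step approximation of a mixed partial: for a real polynomial `F(ξ₁, ξ₂)`,
the coefficient of `j₁j₂` in `F(ξ₁ + j₁h₁, ξ₂ + j₂h₂)`, computed in the bicomplex ring,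
equals `h₁h₂·∂²F/∂ξ₁∂ξ₂ (ξ₁, ξ₂) + O(h₁h₂·(h₁² + h₂²))` as `(h₁, h₂) → 0`. -/
theorem multicomplex_mixed_partial (F : MvPolynomial (Fin 2) ℝ) (ξ₁ ξ₂ : ℝ) :
    (fun p : ℝ × ℝ =>
        (MvPolynomial.eval₂ constHom
            (fun i : Fin 2 => if i = 0 then constHom ξ₁ + constHom p.1 * j1
              else constHom ξ₂ + constHom p.2 * j2) F).w -
          p.1 * p.2 *
            MvPolynomial.eval (fun i : Fin 2 => if i = 0 then ξ₁ else ξ₂)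
              (MvPolynomial.pderiv 1 (MvPolynomial.pderiv 0 F)))
      =O[𝓝 (0 : ℝ × ℝ)] (fun p : ℝ × ℝ => p.1 * p.2 * (p.1 ^ 2 + p.2 ^ 2)) := by
  obtain ⟨D⟩ := MCAux.decomp_ex ξ₁ ξ₂ F
  have key : ∀ p : ℝ × ℝ,
      (MvPolynomial.eval₂ constHom
          (fun i : Fin 2 => if i = 0 then constHom ξ₁ + constHom p.1 * j1
            else constHom ξ₂ + constHom p.2 * j2) F).w -
        p.1 * p.2 *
          MvPolynomial.eval (fun i : Fin 2 => if i = 0 then ξ₁ else ξ₂)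
            (MvPolynomial.pderiv 1 (MvPolynomial.pderiv 0 F))
      = p.1 * p.2 * (p.1 ^ 2 * D.Aw p + p.2 ^ 2 * D.Bw p) := by
    intro p
    have h := D.hw p
    simp only [MCAux.EV, MCAux.ev0] at h
    rw [h]; ring
  rw [isBigO_iff]
  refine ⟨|D.Aw 0| + |D.Bw 0| + 2, ?_⟩
  have h1 : ∀ᶠ p : ℝ × ℝ in 𝓝 0, D.Aw p ∈ Metric.ball (D.Aw 0) 1 :=
    D.cAw.continuousAt (Metric.ball_mem_nhds _ one_pos)
  have h2 : ∀ᶠ p : ℝ × ℝ in 𝓝 0, D.Bw p ∈ Metric.ball (D.Bw 0) 1 :=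
    D.cBw.continuousAt (Metric.ball_mem_nhds _ one_pos)
  filter_upwards [h1, h2] with p hp1 hp2
  rw [Metric.mem_ball, Real.dist_eq] at hp1 hp2
  have hA : |D.Aw p| ≤ |D.Aw 0| + 1 := by
    have := abs_sub_abs_le_abs_sub (D.Aw p) (D.Aw 0); linarith
  have hB : |D.Bw p| ≤ |D.Bw 0| + 1 := by
    have := abs_sub_abs_le_abs_sub (D.Bw p) (D.Bw 0); linarith
  rw [key p, Real.norm_eq_abs, Real.norm_eq_abs]
  set C : ℝ := |D.Aw 0| + |D.Bw 0| + 2 with hC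
  have hC0 : (0:ℝ) ≤ C := by positivity
  have habs : |p.1 * p.2 * (p.1 ^ 2 + p.2 ^ 2)| = |p.1 * p.2| * (p.1 ^ 2 + p.2 ^ 2) := by
    rw [abs_mul, abs_of_nonneg (by positivity : (0:ℝ) ≤ p.1 ^ 2 + p.2 ^ 2)]
  rw [abs_mul, habs, ← mul_assoc, mul_comm C, mul_assoc]
  gcongr |p.1 * p.2| * ?_
  calc |p.1 ^ 2 * D.Aw p + p.2 ^ 2 * D.Bw p|
      ≤ |p.1 ^ 2 * D.Aw p| + |p.2 ^ 2 * D.Bw p| := abs_add_le _ _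
    _ = p.1 ^ 2 * |D.Aw p| + p.2 ^ 2 * |D.Bw p| := by
        rw [abs_mul, abs_mul, abs_of_nonneg (sq_nonneg p.1), abs_of_nonneg (sq_nonneg p.2)]
    _ ≤ C * (p.1 ^ 2 + p.2 ^ 2) := by
        nlinarith [sq_nonneg p.1, sq_nonneg p.2, abs_nonneg (D.Aw p), abs_nonneg (D.Bw p),
          abs_nonneg (D.Aw 0), abs_nonneg (D.Bw 0)]
end
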